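/- Let r ≥ 1 be an integer, h an integer with h > r, n ≥ 0 an integer, q real with 0 < q < 1, x a real number, and f an odd positive integer. Define E_{n,q}^{(h,r)}(x) = 2^r Σ_{(m_1,…,m_r)∈ℕ^r} q^{(h-1)m_1 + ⋯ + (h-r)m_r} (-1)^{m_1+⋯+m_r} [x + m_1+⋯+m_r]_q^n (an absolutely convergent series). Then the distribution relation E_{n,q}^{(h,r)}(x) = [f]_q^n Σ_{(a_1,…,a_r)∈{0,…,f-1}^r} (-1)^{a_1+⋯+a_r} q^{(h-1)a_1+⋯+(h-r)a_r} E_{n,q^f}^{(h,r)}((x + a_1 + ⋯ + a_r)/f) holds. -/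

import Mathlib

open Finset

/-- The `q`-analogue `[y]_q = (1 - q^y)/(1 - q)` (real power). -/
noncomputable def qnum (q y : ℝ) : ℝ := (1 - q ^ y) / (1 - q)

/-- The higher-order `q`-Euler polynomial
`E_{n,q}^{(h,r)}(x) = 2^r Σ_{(m_1,…,m_r)∈ℕ^r} q^{(h-1)m_1+⋯+(h-r)m_r} (-1)^{m_1+⋯+m_r}
[x+m_1+⋯+m_r]_q^n`. -/
noncomputable def qEulerHR (n : ℕ) (h : ℤ) (r : ℕ) (q x : ℝ) : ℝ :=
  (2 : ℝ) ^ r * ∑' m : Fin r → ℕ,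
    q ^ (∑ j : Fin r, (h - 1 - (j : ℤ)) * (m j : ℤ)) * (-1 : ℝ) ^ (∑ j, m j) *
      qnum q (x + (↑(∑ j, m j) : ℝ)) ^ n

/-- Geometric series over `Fin r → ℕ`. -/
lemma aux_summable_geo (r : ℕ) {q : ℝ} (hq0 : 0 ≤ q) (hq1 : q < 1) :
    Summable (fun m : Fin r → ℕ => q ^ (∑ j, m j)) := by
  induction r with
  | zero => exact Summable.of_finite
  | succ r ih =>
    have hs : Summable (fun p : ℕ × (Fin r → ℕ) => q ^ p.1 * q ^ (∑ j, p.2 j)) :=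
      Summable.mul_of_nonneg (f := fun k : ℕ => q ^ k)
        (g := fun m : Fin r → ℕ => q ^ (∑ j, m j))
        (summable_geometric_of_lt_one hq0 hq1) ih
        (fun _ => pow_nonneg hq0 _) (fun _ => pow_nonneg hq0 _)
    refine ((Fin.consEquiv (fun _ : Fin (r + 1) => ℕ)).summable_iff).mp (hs.congr fun p => ?_)
    show q ^ p.1 * q ^ (∑ j, p.2 j) = q ^ (∑ j, Fin.cons p.1 p.2 j)
    simp [Fin.sum_univ_succ, pow_add]

/-- Summability of the absolute values of the terms of the `q`-Euler series. -/
lemma aux_summable_abs (n : ℕ) (h : ℤ) (r : ℕ) (hh : (r : ℤ) < h) {q : ℝ}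
    (hq0 : 0 < q) (hq1 : q < 1) (x : ℝ) :
    Summable (fun m : Fin r → ℕ =>
      |q ^ (∑ j : Fin r, (h - 1 - (j : ℤ)) * (m j : ℤ)) * (-1 : ℝ) ^ (∑ j, m j) *
        qnum q (x + (↑(∑ j, m j) : ℝ)) ^ n|) := by
  set C0 : ℝ := (1 + q ^ x) / (1 - q) with hC0
  have h1q : (0:ℝ) < 1 - q := by linarith
  have hC0nn : 0 ≤ C0 := by
    apply div_nonneg _ h1q.le
    have := Real.rpow_pos_of_pos hq0 x
    linarith
  refine Summable.of_nonneg_of_le (fun m => abs_nonneg _) ?_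
    ((aux_summable_geo r hq0.le hq1).mul_right (C0 ^ n))
  intro m
  have habs : |q ^ (∑ j : Fin r, (h - 1 - (j : ℤ)) * (m j : ℤ)) * (-1 : ℝ) ^ (∑ j, m j) *
      qnum q (x + (↑(∑ j, m j) : ℝ)) ^ n| =
      q ^ (∑ j : Fin r, (h - 1 - (j : ℤ)) * (m j : ℤ)) *
        |qnum q (x + (↑(∑ j, m j) : ℝ))| ^ n := by
    rw [abs_mul, abs_mul, abs_pow, abs_neg, abs_one, one_pow, mul_one, abs_pow,
      abs_of_pos (zpow_pos hq0 _)]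
  rw [habs]
  show _ ≤ q ^ (∑ j, m j) * C0 ^ n
  have hzle : q ^ (∑ j : Fin r, (h - 1 - (j : ℤ)) * (m j : ℤ)) ≤ q ^ (∑ j, m j) := by
    have hle : ((∑ j, m j : ℕ) : ℤ) ≤ ∑ j : Fin r, (h - 1 - (j : ℤ)) * (m j : ℤ) := by
      push_cast
      apply Finset.sum_le_sum
      intro j _
      have hj : ((j : ℕ) : ℤ) < r := by exact_mod_cast j.isLt
      have h1 : (1:ℤ) ≤ h - 1 - (j : ℤ) := by omega
      nlinarith [Int.ofNat_nonneg (m j)]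
    calc q ^ (∑ j : Fin r, (h - 1 - (j : ℤ)) * (m j : ℤ))
        ≤ q ^ ((∑ j, m j : ℕ) : ℤ) :=
          zpow_le_zpow_right_of_le_one₀ hq0 hq1.le hle
      _ = q ^ (∑ j, m j) := zpow_natCast q _
  have hqnum : |qnum q (x + (↑(∑ j, m j) : ℝ))| ≤ C0 := by
    unfold qnum
    rw [abs_div, abs_of_pos h1q, hC0]
    gcongr
    case hab =>
      have ht0 : (0:ℝ) < q ^ (x + (↑(∑ j, m j) : ℝ)) := Real.rpow_pos_of_pos hq0 _
      have htle : q ^ (x + (↑(∑ j, m j) : ℝ)) ≤ q ^ x := by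
        apply Real.rpow_le_rpow_of_exponent_ge hq0 hq1.le
        have : (0:ℝ) ≤ (↑(∑ j, m j) : ℝ) := Nat.cast_nonneg _
        linarith
      have hx0 : (0:ℝ) < q ^ x := Real.rpow_pos_of_pos hq0 _
      rw [abs_le]
      constructor <;> nlinarith
  calc q ^ (∑ j : Fin r, (h - 1 - (j : ℤ)) * (m j : ℤ)) *
        |qnum q (x + (↑(∑ j, m j) : ℝ))| ^ n
      ≤ q ^ (∑ j, m j) * C0 ^ n := by
        apply mul_le_mul hzle (pow_le_pow_left₀ (abs_nonneg _) hqnum n)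
          (pow_nonneg (abs_nonneg _) n) (pow_nonneg hq0.le _)

/-- Distribution property of `[·]_q`. -/
lemma qnum_fac {q : ℝ} (hq0 : 0 < q) (hq1 : q < 1) {f : ℕ} (hf : 0 < f) (y : ℝ) :
    qnum q y = qnum q f * qnum (q ^ f) (y / f) := by
  have hf0 : (f : ℝ) ≠ 0 := Nat.cast_ne_zero.mpr hf.ne'
  have hqf1 : q ^ f < 1 := pow_lt_one₀ hq0.le hq1 hf.ne'
  have h1q : (1:ℝ) - q ≠ 0 := by intro hc; nlinarith
  have h1qf : (1:ℝ) - q ^ f ≠ 0 := by intro hc; nlinarith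
  have hrw : (q ^ f : ℝ) ^ (y / f) = q ^ y := by
    rw [← Real.rpow_natCast q f, ← Real.rpow_mul hq0.le]
    congr 1
    field_simp
  have hrw2 : q ^ ((f : ℕ) : ℝ) = q ^ f := Real.rpow_natCast q f
  unfold qnum
  rw [hrw, hrw2]
  field_simp

/-- The residue decomposition equivalence. -/
def resEquiv (r f : ℕ) (hf : 0 < f) : ((Fin r → Fin f) × (Fin r → ℕ)) ≃ (Fin r → ℕ) where
  toFun p := fun j => (p.1 j : ℕ) + f * p.2 j
  invFun m := (fun j => ⟨m j % f, Nat.mod_lt _ hf⟩, fun j => m j / f)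
  left_inv p := by
    ext j
    · simp [Nat.add_mul_mod_self_left, Nat.mod_eq_of_lt (p.1 j).isLt]
    · simp [Nat.add_mul_div_left _ _ hf, Nat.div_eq_of_lt (p.1 j).isLt]
  right_inv m := by
    funext j
    simp [Nat.mod_add_div]

theorem stmt_5 (r : ℕ) (hr : 1 ≤ r) (h : ℤ) (hh : (r : ℤ) < h) (n : ℕ)
    (q : ℝ) (hq0 : 0 < q) (hq1 : q < 1) (x : ℝ) (f : ℕ) (hf : 0 < f) (hfodd : Odd f) :
    Summable (fun m : Fin r → ℕ =>
      |q ^ (∑ j : Fin r, (h - 1 - (j : ℤ)) * (m j : ℤ)) * (-1 : ℝ) ^ (∑ j, m j) *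
        qnum q (x + (↑(∑ j, m j) : ℝ)) ^ n|) ∧
    (∀ a : Fin r → Fin f,
      Summable (fun m : Fin r → ℕ =>
        |(q ^ f) ^ (∑ j : Fin r, (h - 1 - (j : ℤ)) * (m j : ℤ)) * (-1 : ℝ) ^ (∑ j, m j) *
          qnum (q ^ f) ((x + (↑(∑ j, (a j : ℕ)) : ℝ)) / f + (↑(∑ j, m j) : ℝ)) ^ n|)) ∧
    qEulerHR n h r q x =
      qnum q f ^ n *
        ∑ a : Fin r → Fin f,
          (-1 : ℝ) ^ (∑ j, (a j : ℕ)) * q ^ (∑ j : Fin r, (h - 1 - (j : ℤ)) * ((a j : ℕ) : ℤ)) *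
            qEulerHR n h r (q ^ f) ((x + (↑(∑ j, (a j : ℕ)) : ℝ)) / f) := by
  have hqf0 : 0 < q ^ f := pow_pos hq0 f
  have hqf1 : q ^ f < 1 := pow_lt_one₀ hq0.le hq1 hf.ne'
  have hfne : (f : ℝ) ≠ 0 := Nat.cast_ne_zero.mpr hf.ne'
  refine ⟨aux_summable_abs n h r hh hq0 hq1 x,
    fun a => aux_summable_abs n h r hh hqf0 hqf1 _, ?_⟩
  -- the actual terms are summable
  set T : (Fin r → ℕ) → ℝ := fun m =>
    q ^ (∑ j : Fin r, (h - 1 - (j : ℤ)) * (m j : ℤ)) * (-1 : ℝ) ^ (∑ j, m j) *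
      qnum q (x + (↑(∑ j, m j) : ℝ)) ^ n with hT
  have hTsum : Summable T := (summable_abs_iff).mp (aux_summable_abs n h r hh hq0 hq1 x)
  have hTa : ∀ a : Fin r → Fin f, Summable (fun m : Fin r → ℕ =>
      (q ^ f) ^ (∑ j : Fin r, (h - 1 - (j : ℤ)) * (m j : ℤ)) * (-1 : ℝ) ^ (∑ j, m j) *
        qnum (q ^ f) ((x + (↑(∑ j, (a j : ℕ)) : ℝ)) / f + (↑(∑ j, m j) : ℝ)) ^ n) :=
    fun a => (summable_abs_iff).mp (aux_summable_abs n h r hh hqf0 hqf1 _)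
  -- pointwise identity
  have key : ∀ (a : Fin r → Fin f) (m : Fin r → ℕ),
      T (resEquiv r f hf (a, m)) =
      (-1 : ℝ) ^ (∑ j, (a j : ℕ)) * q ^ (∑ j : Fin r, (h - 1 - (j : ℤ)) * ((a j : ℕ) : ℤ)) *
        qnum q f ^ n *
        ((q ^ f) ^ (∑ j : Fin r, (h - 1 - (j : ℤ)) * (m j : ℤ)) * (-1 : ℝ) ^ (∑ j, m j) *
          qnum (q ^ f) ((x + (↑(∑ j, (a j : ℕ)) : ℝ)) / f + (↑(∑ j, m j) : ℝ)) ^ n) := by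
    intro a m
    have hS : (∑ j, ((a j : ℕ) + f * m j)) = (∑ j, (a j : ℕ)) + f * ∑ j, m j := by
      rw [Finset.sum_add_distrib, Finset.mul_sum]
    have hZ : (∑ j : Fin r, (h - 1 - (j : ℤ)) * (((a j : ℕ) + f * m j : ℕ) : ℤ)) =
        (∑ j : Fin r, (h - 1 - (j : ℤ)) * ((a j : ℕ) : ℤ)) +
          (f : ℤ) * ∑ j : Fin r, (h - 1 - (j : ℤ)) * (m j : ℤ) := by
      rw [Finset.mul_sum, ← Finset.sum_add_distrib]
      apply Finset.sum_congr rfl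
      intro j _
      push_cast
      ring
    have hqnum : qnum q (x + (↑(∑ j, ((a j : ℕ) + f * m j)) : ℝ)) =
        qnum q f * qnum (q ^ f) ((x + (↑(∑ j, (a j : ℕ)) : ℝ)) / f + (↑(∑ j, m j) : ℝ)) := by
      rw [qnum_fac hq0 hq1 hf (x + (↑(∑ j, ((a j : ℕ) + f * m j)) : ℝ))]
      congr 1
      rw [hS]
      push_cast
      field_simp
      ring
    show T (fun j => (a j : ℕ) + f * m j) = _
    rw [hT]
    simp only
    rw [hZ, hqnum, hS, zpow_add₀ hq0.ne', zpow_mul, zpow_natCast, pow_add, pow_mul,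
      Odd.neg_one_pow hfodd, mul_pow]
    ring
  -- rewrite the tsum
  have hstep : (∑' m : Fin r → ℕ, T m) =
      ∑ a : Fin r → Fin f,
        ((-1 : ℝ) ^ (∑ j, (a j : ℕ)) * q ^ (∑ j : Fin r, (h - 1 - (j : ℤ)) * ((a j : ℕ) : ℤ)) *
          qnum q f ^ n *
          ∑' m : Fin r → ℕ,
            ((q ^ f) ^ (∑ j : Fin r, (h - 1 - (j : ℤ)) * (m j : ℤ)) * (-1 : ℝ) ^ (∑ j, m j) *
              qnum (q ^ f) ((x + (↑(∑ j, (a j : ℕ)) : ℝ)) / f + (↑(∑ j, m j) : ℝ)) ^ n)) := by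
    rw [← (resEquiv r f hf).tsum_eq T]
    have hTe : Summable (T ∘ (resEquiv r f hf)) := ((resEquiv r f hf).summable_iff).mpr hTsum
    rw [show (∑' p : (Fin r → Fin f) × (Fin r → ℕ), T (resEquiv r f hf p)) =
        ∑' p : (Fin r → Fin f) × (Fin r → ℕ), (T ∘ (resEquiv r f hf)) p from rfl]
    rw [Summable.tsum_prod hTe, tsum_fintype]
    apply Finset.sum_congr rfl
    intro a _
    rw [show (∑' m : Fin r → ℕ, (T ∘ (resEquiv r f hf)) (a, m)) =
        ∑' m : Fin r → ℕ, ((-1 : ℝ) ^ (∑ j, (a j : ℕ)) *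
          q ^ (∑ j : Fin r, (h - 1 - (j : ℤ)) * ((a j : ℕ) : ℤ)) * qnum q f ^ n *
          ((q ^ f) ^ (∑ j : Fin r, (h - 1 - (j : ℤ)) * (m j : ℤ)) * (-1 : ℝ) ^ (∑ j, m j) *
            qnum (q ^ f) ((x + (↑(∑ j, (a j : ℕ)) : ℝ)) / f + (↑(∑ j, m j) : ℝ)) ^ n))
      from tsum_congr (fun m => key a m)]
    rw [tsum_mul_left]
  -- conclude
  unfold qEulerHR
  rw [← hT, hstep, Finset.mul_sum, Finset.mul_sum]
  apply Finset.sum_congr rfl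
  intro a _
  ring
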